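/- arXiv:1210.1788 — 2 statements merged into one kernel-verified Lean document; each statement's English description precedes it below -/
import Mathlib

section
/- Let Ω ⊂ ℝⁿ be a bounded domain with C¹ boundary and let u ∈ C²(Ω̄) satisfy the Neumann condition ∂u/∂ν = 1 on ∂Ω, where ν is the outward unit normal. Let Γ_u ⊂ Ω be the lower contact set of u, i.e., the set of points x ∈ Ω such that u(y) ≥ u(x) + ∇u(x)·(y − x) for all y ∈ Ω̄. Then the open Euclidean unit ball B₁ of ℝⁿ centered at the origin is contained in ∇u(Γ_u), the image of Γ_u under the gradient map of u. -/
open MeasureTheory Metric Set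
open scoped RealInnerProductSpace NNReal ENNReal

noncomputable section

/-- A bounded domain of class `C¹` in `ℝⁿ`: a bounded, connected, open set whose boundary is
locally the graph of a `C¹` function (the set lying locally on one side of the graph). -/
def IsC1Domain {n : ℕ} (Ω : Set (EuclideanSpace ℝ (Fin n))) : Prop :=
  IsOpen Ω ∧ IsConnected Ω ∧ Bornology.IsBounded Ω ∧
  ∀ x ∈ frontier Ω, ∃ r > (0:ℝ), ∃ v : EuclideanSpace ℝ (Fin n), ‖v‖ = 1 ∧
    ∃ φ : EuclideanSpace ℝ (Fin n) → ℝ, ContDiff ℝ 1 φ ∧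
      ∀ y ∈ ball x r, (y ∈ Ω ↔ φ (y - ⟪y, v⟫ • v) < ⟪y, v⟫)

/-- `ν` is the outward unit normal vector field on the boundary of `Ω`. -/
def IsOutwardUnitNormal {n : ℕ} (Ω : Set (EuclideanSpace ℝ (Fin n)))
    (ν : EuclideanSpace ℝ (Fin n) → EuclideanSpace ℝ (Fin n)) : Prop :=
  ∀ x ∈ frontier Ω, ‖ν x‖ = 1 ∧
    (∀ᶠ t : ℝ in nhdsWithin 0 (Ioi 0), x + t • ν x ∉ closure Ω) ∧
    (∀ᶠ t : ℝ in nhdsWithin 0 (Ioi 0), x - t • ν x ∈ Ω)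

/-- If `u ∈ C²(Ω̄)` on a bounded `C¹` domain `Ω` satisfies the Neumann condition
`∂u/∂ν = 1` on `∂Ω`, then the unit ball `B₁` is contained in the image of the lower
contact set `Γ_u` of `u` under the gradient map `∇u`. -/
theorem unit_ball_subset_gradient_image_of_lower_contact_set
    (n : ℕ) (hn : 1 ≤ n)
    (Ω : Set (EuclideanSpace ℝ (Fin n))) (hΩ : IsC1Domain Ω)
    (u : EuclideanSpace ℝ (Fin n) → ℝ)
    (U : Set (EuclideanSpace ℝ (Fin n))) (hUopen : IsOpen U) (hΩU : closure Ω ⊆ U)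
    (hu : ContDiffOn ℝ 2 u U)
    (ν : EuclideanSpace ℝ (Fin n) → EuclideanSpace ℝ (Fin n))
    (hν : IsOutwardUnitNormal Ω ν)
    (hNeumann : ∀ x ∈ frontier Ω, ⟪gradient u x, ν x⟫ = 1) :
    ball (0 : EuclideanSpace ℝ (Fin n)) 1 ⊆
      gradient u '' {x ∈ Ω | ∀ y ∈ closure Ω, u x + ⟪gradient u x, y - x⟫ ≤ u y} := by
  obtain ⟨hΩopen, hΩconn, hΩbdd, -⟩ := hΩ
  intro p hp
  rw [mem_ball, dist_zero_right] at hp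
  set v : EuclideanSpace ℝ (Fin n) → ℝ := fun x => u x - ⟪p, x⟫ with hvdef
  have hudiff : ∀ x ∈ U, DifferentiableAt ℝ u x := fun x hx =>
    (hu.contDiffAt (hUopen.mem_nhds hx)).differentiableAt (by norm_num)
  have hinner : ∀ x : EuclideanSpace ℝ (Fin n), HasFDerivAt (fun y : EuclideanSpace ℝ (Fin n) => ⟪p, y⟫)
      (InnerProductSpace.toDual ℝ (EuclideanSpace ℝ (Fin n)) p : EuclideanSpace ℝ (Fin n) →L[ℝ] ℝ) x := by
    intro x
    have h1 := (InnerProductSpace.toDual ℝ (EuclideanSpace ℝ (Fin n)) p).hasFDerivAt (x := x)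
    have h2 : (fun y : EuclideanSpace ℝ (Fin n) => ⟪p, y⟫) = ⇑(InnerProductSpace.toDual ℝ (EuclideanSpace ℝ (Fin n)) p) := by
      funext y; simp [InnerProductSpace.toDual_apply_apply]
    rw [h2]; exact h1
  have hvF : ∀ x ∈ U, HasFDerivAt v
      (InnerProductSpace.toDual ℝ (EuclideanSpace ℝ (Fin n)) (gradient u x - p)) x := by
    intro x hx
    have hgu : HasFDerivAt u (InnerProductSpace.toDual ℝ (EuclideanSpace ℝ (Fin n)) (gradient u x)) x :=
      ((hudiff x hx).hasGradientAt).hasFDerivAt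
    have h1 := hgu.sub (hinner x)
    have h2 : InnerProductSpace.toDual ℝ (EuclideanSpace ℝ (Fin n)) (gradient u x - p)
        = InnerProductSpace.toDual ℝ (EuclideanSpace ℝ (Fin n)) (gradient u x) - InnerProductSpace.toDual ℝ (EuclideanSpace ℝ (Fin n)) p :=
      map_sub _ _ _
    rw [h2]; exact h1
  -- minimize v on the compact closure of Ω
  have hK : IsCompact (closure Ω) :=
    Metric.isCompact_of_isClosed_isBounded isClosed_closure hΩbdd.closure
  have hne : (closure Ω).Nonempty := hΩconn.nonempty.mono subset_closure
  have hcont : ContinuousOn v (closure Ω) := by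
    apply ContinuousOn.mono _ hΩU
    exact (hu.continuousOn).sub ((continuous_const.inner continuous_id).continuousOn)
  obtain ⟨x₀, hx₀, hmin⟩ := hK.exists_isMinOn hne hcont
  have hmin' : ∀ y ∈ closure Ω, v x₀ ≤ v y := isMinOn_iff.mp hmin
  have hx₀U : x₀ ∈ U := hΩU hx₀
  -- the minimum cannot be on the boundary
  have hx₀Ω : x₀ ∈ Ω := by
    by_contra hco
    have hfr : x₀ ∈ frontier Ω := by rw [hΩopen.frontier_eq]; exact ⟨hx₀, hco⟩
    obtain ⟨hν1, -, hν3⟩ := hν x₀ hfr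
    set w := ν x₀ with hw
    have hline : HasDerivAt (fun t : ℝ => x₀ - t • w) (-w) 0 := by
      have h1 : HasDerivAt (fun t : ℝ => t • w) w 0 := by
        simpa using (hasDerivAt_id (0:ℝ)).smul_const w
      simpa using h1.const_sub x₀
    have hc0 : x₀ - (0:ℝ) • w = x₀ := by simp
    have hg : HasDerivAt (fun t : ℝ => v (x₀ - t • w))
        ((InnerProductSpace.toDual ℝ (EuclideanSpace ℝ (Fin n)) (gradient u x₀ - p)) (-w)) 0 := by
      have hF : HasFDerivAt v (InnerProductSpace.toDual ℝ (EuclideanSpace ℝ (Fin n)) (gradient u x₀ - p))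
          (x₀ - (0:ℝ) • w) := by rw [hc0]; exact hvF x₀ hx₀U
      exact hF.comp_hasDerivAt 0 hline
    have hval : (InnerProductSpace.toDual ℝ (EuclideanSpace ℝ (Fin n)) (gradient u x₀ - p)) (-w) < 0 := by
      rw [InnerProductSpace.toDual_apply_apply, inner_neg_right, inner_sub_left,
        hNeumann x₀ hfr]
      have h1 : ⟪p, w⟫ ≤ ‖p‖ * ‖w‖ := real_inner_le_norm p w
      rw [hν1, mul_one] at h1
      linarith
    have hslope : Filter.Tendsto (slope (fun t : ℝ => v (x₀ - t • w)) 0) (nhdsWithin 0 (Ioi 0))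
        (nhds ((InnerProductSpace.toDual ℝ (EuclideanSpace ℝ (Fin n)) (gradient u x₀ - p)) (-w))) := by
      refine (hasDerivAt_iff_tendsto_slope.mp hg).mono_left (nhdsWithin_mono 0 ?_)
      intro t ht
      exact (ne_of_gt ht : t ≠ 0)
    have hneg : ∀ᶠ t in nhdsWithin (0:ℝ) (Ioi 0),
        slope (fun t : ℝ => v (x₀ - t • w)) 0 t < 0 :=
      hslope.eventually_lt_const hval
    have hcomb := (hneg.and hν3).and self_mem_nhdsWithin
    obtain ⟨t, ⟨hts, htΩ⟩, htpos⟩ := hcomb.exists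
    have htpos' : (0:ℝ) < t := htpos
    have h2 : (v (x₀ - t • w) - v x₀) / t < 0 := by
      have := hts
      rw [slope_def_field] at this
      simpa [hc0] using this
    have h3 : v (x₀ - t • w) < v x₀ := by
      rcases div_neg_iff.mp h2 with ⟨h1, h2'⟩ | ⟨h1, h2'⟩
      · linarith
      · linarith
    have := hmin' _ (subset_closure htΩ)
    linarith
  -- interior minimum: gradient equals p
  have hloc : IsLocalMin v x₀ :=
    Filter.eventually_of_mem (mem_nhds_iff.mpr ⟨Ω, subset_closure.trans (fun y hy => hmin' y hy), hΩopen, hx₀Ω⟩) (fun y hy => hy)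
  have hF0 : InnerProductSpace.toDual ℝ (EuclideanSpace ℝ (Fin n)) (gradient u x₀ - p) = 0 :=
    hloc.hasFDerivAt_eq_zero (hvF x₀ hx₀U)
  have hgrad : gradient u x₀ = p := by
    have h1 : gradient u x₀ - p = 0 := by
      have := congrArg (InnerProductSpace.toDual ℝ (EuclideanSpace ℝ (Fin n))).symm hF0
      simpa [gradient] using this
    exact sub_eq_zero.mp h1
  refine ⟨x₀, ⟨hx₀Ω, ?_⟩, hgrad⟩
  intro y hy
  have h1 := hmin' y hy
  rw [hgrad, inner_sub_right]
  simp only [hvdef] at h1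
  linarith

end
end

section
/- Let Σ be an open convex cone in ℝⁿ, α > 0, D = n + α, and let w : Σ → ℝ be positive, C¹ in Σ, homogeneous of degree α, with w^{1/α} concave on Σ. Let b > 0 be a constant. Suppose x ∈ Σ, p ∈ Σ, and L ≥ 0 are such that ∇w(x) · p + w(x) L = b w(x) (the elliptic equation w^{-1} div(w ∇u) = b evaluated at a point with gradient p and Laplacian L). Then w(p) (L/n)^n ≤ w(x) (b/D)^D. -/
open MeasureTheory Metric Set
open scoped RealInnerProductSpace NNReal ENNReal Topology

noncomputable section

/-- Derivative comparison at a left endpoint: if `f ≥ g` just to the right of `0`,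
`f 0 = g 0`, and both have derivatives at `0`, then `g' ≤ f'`. -/
theorem aux_deriv_le_of_right_le (f g : ℝ → ℝ) (f' g' : ℝ)
    (hf : HasDerivAt f f' 0) (hg : HasDerivAt g g' 0)
    (h0 : f 0 = g 0) (hle : ∀ t ∈ Set.Ioc (0:ℝ) 1, g t ≤ f t) : g' ≤ f' := by
  have hf' : Filter.Tendsto (slope f 0) (𝓝[>] 0) (𝓝 f') :=
    (hasDerivAt_iff_tendsto_slope.mp hf).mono_left
      (nhdsWithin_mono _ (fun t ht => ne_of_gt ht))
  have hg' : Filter.Tendsto (slope g 0) (𝓝[>] 0) (𝓝 g') :=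
    (hasDerivAt_iff_tendsto_slope.mp hg).mono_left
      (nhdsWithin_mono _ (fun t ht => ne_of_gt ht))
  refine le_of_tendsto_of_tendsto hg' hf' ?_
  filter_upwards [Ioc_mem_nhdsGT zero_lt_one] with t ht
  rw [slope_def_field, slope_def_field]
  have ht0 : (0:ℝ) < t := ht.1
  rw [div_le_div_iff₀ (by linarith) (by linarith)]
  nlinarith [hle t ht]

/-- Pointwise key inequality: if `S` is an open convex cone, `w` is positive, `C¹`,
homogeneous of degree `α > 0` with `w^{1/α}` concave on `S`, `b > 0`, and `x, p ∈ S`,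
`L ≥ 0` satisfy `∇w(x)·p + w(x) L = b w(x)`, then with `D = n + α` one has
`w(p) (L/n)^n ≤ w(x) (b/D)^D`. -/
theorem pointwise_key_inequality
    (n : ℕ) (hn : 1 ≤ n)
    (S : Set (EuclideanSpace ℝ (Fin n)))
    (hSopen : IsOpen S) (hSconv : Convex ℝ S)
    (hScone : ∀ x ∈ S, ∀ t : ℝ, 0 < t → t • x ∈ S)
    (α : ℝ) (hα : 0 < α)
    (w : EuclideanSpace ℝ (Fin n) → ℝ)
    (hwpos : ∀ x ∈ S, 0 < w x)
    (hwC1 : ContDiffOn ℝ 1 w S)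
    (hhom : ∀ x ∈ S, ∀ t : ℝ, 0 < t → w (t • x) = t ^ α * w x)
    (hconc : ConcaveOn ℝ S (fun x => w x ^ (1 / α)))
    (b : ℝ) (hb : 0 < b)
    (x : EuclideanSpace ℝ (Fin n)) (hx : x ∈ S)
    (p : EuclideanSpace ℝ (Fin n)) (hp : p ∈ S)
    (L : ℝ) (hL : 0 ≤ L)
    (heq : ⟪gradient w x, p⟫ + w x * L = b * w x) :
    w p * (L / n) ^ (n : ℝ) ≤ w x * (b / ((n : ℝ) + α)) ^ ((n : ℝ) + α) := by
  have hwx : 0 < w x := hwpos x hx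
  have hwp : 0 < w p := hwpos p hp
  set A : ℝ := w x ^ (1 / α) with hAdef
  set B : ℝ := w p ^ (1 / α) with hBdef
  have hApos : 0 < A := Real.rpow_pos_of_pos hwx _
  have hBpos : 0 < B := Real.rpow_pos_of_pos hwp _
  -- differentiability of w at x
  have hdiff : DifferentiableAt ℝ w x :=
    (hwC1.differentiableOn one_ne_zero).differentiableAt (hSopen.mem_nhds hx)
  have hfd : HasFDerivAt w (InnerProductSpace.toDual ℝ _ (gradient w x)) x :=
    hdiff.hasGradientAt.hasFDerivAt
  -- Euler's identity: ⟪∇w x, x⟫ = α * w x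
  have hlineE : HasDerivAt (fun t : ℝ => t • x) x 1 := by
    simpa using (hasDerivAt_id (1:ℝ)).smul_const x
  have hE1 : HasDerivAt (fun t : ℝ => w (t • x)) ⟪gradient w x, x⟫ 1 := by
    have hfd1 : HasFDerivAt w (InnerProductSpace.toDual ℝ _ (gradient w x)) ((1:ℝ) • x) := by
      rwa [one_smul]
    simpa [Function.comp_def] using hfd1.comp_hasDerivAt 1 hlineE
  have hE2 : HasDerivAt (fun t : ℝ => w (t • x)) (α * w x) 1 := by
    have hrp : HasDerivAt (fun t : ℝ => t ^ α * w x) (α * w x) 1 := by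
      have := (Real.hasDerivAt_rpow_const (x := (1:ℝ)) (p := α)
        (Or.inl one_ne_zero)).mul_const (w x)
      simpa using this
    refine hrp.congr_of_eventuallyEq ?_
    filter_upwards [Ioi_mem_nhds (zero_lt_one : (0:ℝ) < 1)] with t ht
    exact hhom x hx t ht
  have hEuler : ⟪gradient w x, x⟫ = α * w x := hE1.unique hE2
  -- directional derivative inequality from concavity
  have hline : HasDerivAt (fun t : ℝ => x + t • (p - x)) (p - x) 0 := by
    simpa using ((hasDerivAt_id (0:ℝ)).smul_const (p - x)).const_add x
  have hψ : HasDerivAt (fun t : ℝ => w (x + t • (p - x))) ⟪gradient w x, p - x⟫ 0 := by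
    have h0 : x + (0:ℝ) • (p - x) = x := by simp
    rw [← h0] at hfd
    simpa [Function.comp_def] using hfd.comp_hasDerivAt 0 hline
  have hh : HasDerivAt (fun t : ℝ => w (x + t • (p - x)) ^ (1 / α))
      (⟪gradient w x, p - x⟫ * (1 / α) * w x ^ (1 / α - 1)) 0 := by
    have := hψ.rpow_const (p := 1 / α) (Or.inl (by simp; exact hwx.ne'))
    simpa using this
  have hℓ : HasDerivAt (fun t : ℝ => (1 - t) * A + t * B) (B - A) 0 := by
    have : HasDerivAt (fun t : ℝ => (1 - t) * A + t * B) (-1 * A + 1 * B) 0 := by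
      exact (((hasDerivAt_id (0:ℝ)).const_sub 1).mul_const A).add
        ((hasDerivAt_id (0:ℝ)).mul_const B)
    convert this using 1
    ring
  have hcmp : ∀ t ∈ Set.Ioc (0:ℝ) 1,
      (1 - t) * A + t * B ≤ w (x + t • (p - x)) ^ (1 / α) := by
    intro t ht
    have hmem : x + t • (p - x) = (1 - t) • x + t • p := by module
    have h1t : (0:ℝ) ≤ 1 - t := by linarith [ht.2]
    have := hconc.2 hx hp h1t ht.1.le (by ring)
    rw [hmem, hAdef, hBdef]
    simpa [smul_eq_mul, one_div] using this
  have hder : B - A ≤ ⟪gradient w x, p - x⟫ * (1 / α) * w x ^ (1 / α - 1) := by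
    refine aux_deriv_le_of_right_le _ _ _ _ hh hℓ (by simp [hAdef]) hcmp
  -- algebra
  have hip : ⟪gradient w x, p⟫ = (b - L) * w x := by
    have : ⟪gradient w x, p⟫ = b * w x - w x * L := by linarith [heq]
    rw [this]; ring
  have hsub : ⟪gradient w x, p - x⟫ = (b - L) * w x - α * w x := by
    rw [inner_sub_right, hip, hEuler]
  have hCw : w x ^ (1 / α - 1) * w x = A := by
    rw [hAdef, ← Real.rpow_add_one hwx.ne']
    norm_num
  have hmain : α * B ≤ (b - L) * A := by
    have h1 : α * (B - A) ≤ α * (⟪gradient w x, p - x⟫ * (1 / α) * w x ^ (1 / α - 1)) :=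
      mul_le_mul_of_nonneg_left hder hα.le
    rw [hsub] at h1
    have h2 : α * (((b - L) * w x - α * w x) * (1 / α) * w x ^ (1 / α - 1))
        = ((b - L) - α) * A := by
      rw [← hCw]; field_simp
    rw [h2] at h1
    nlinarith [h1, hApos]
  have hbL : 0 < b - L := by nlinarith
  -- w p ≤ ((b-L)/α)^α * w x
  have hwple : w p ≤ ((b - L) / α) ^ α * w x := by
    have h1 : B ≤ (b - L) / α * A := by
      rw [div_mul_eq_mul_div, le_div_iff₀ hα]
      nlinarith
    have h2 : B ^ α ≤ ((b - L) / α * A) ^ α :=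
      Real.rpow_le_rpow hBpos.le h1 hα.le
    have hBα : B ^ α = w p := by
      rw [hBdef, ← Real.rpow_mul hwp.le, one_div, inv_mul_cancel₀ hα.ne', Real.rpow_one]
    have hAα : A ^ α = w x := by
      rw [hAdef, ← Real.rpow_mul hwx.le, one_div, inv_mul_cancel₀ hα.ne', Real.rpow_one]
    calc w p = B ^ α := hBα.symm
      _ ≤ ((b - L) / α * A) ^ α := h2
      _ = ((b - L) / α) ^ α * A ^ α :=
          Real.mul_rpow (by positivity) hApos.le
      _ = ((b - L) / α) ^ α * w x := by rw [hAα]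
  -- AM-GM
  set D : ℝ := (n : ℝ) + α with hDdef
  have hnpos : (0:ℝ) < n := by exact_mod_cast hn
  have hD : 0 < D := by positivity
  set X : ℝ := (b - L) / α with hXdef
  set Y : ℝ := L / n with hYdef
  have hX : 0 < X := by positivity
  have hY : 0 ≤ Y := by positivity
  have hgm : X ^ (α / D) * Y ^ ((n : ℝ) / D) ≤ b / D := by
    have := Real.geom_mean_le_arith_mean2_weighted
      (w₁ := α / D) (w₂ := (n : ℝ) / D) (p₁ := X) (p₂ := Y)
      (by positivity) (by positivity) hX.le hY
      (by rw [← add_div, hDdef, add_comm α]; exact div_self hD.ne')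
    calc X ^ (α / D) * Y ^ ((n : ℝ) / D) ≤ (α / D) * X + ((n : ℝ) / D) * Y := this
      _ = b / D := by
          rw [hXdef, hYdef]
          field_simp
          ring
  have hamgm : X ^ α * Y ^ (n : ℝ) ≤ (b / D) ^ D := by
    have h2 : (X ^ (α / D) * Y ^ ((n : ℝ) / D)) ^ D ≤ (b / D) ^ D :=
      Real.rpow_le_rpow (by positivity) hgm hD.le
    calc X ^ α * Y ^ (n : ℝ)
        = (X ^ (α / D) * Y ^ ((n : ℝ) / D)) ^ D := by
          rw [Real.mul_rpow (by positivity) (by positivity),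
            ← Real.rpow_mul hX.le, ← Real.rpow_mul hY,
            div_mul_cancel₀ _ hD.ne', div_mul_cancel₀ _ hD.ne']
      _ ≤ (b / D) ^ D := h2
  calc w p * Y ^ (n : ℝ) ≤ (X ^ α * w x) * Y ^ (n : ℝ) :=
        mul_le_mul_of_nonneg_right hwple (Real.rpow_nonneg hY _)
    _ = w x * (X ^ α * Y ^ (n : ℝ)) := by ring
    _ ≤ w x * (b / D) ^ D := mul_le_mul_of_nonneg_left hamgm hwx.le

end
end
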